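/- arXiv:2007.06193 — 2 statements merged into one kernel-verified Lean document; each statement's English description precedes it below -/
import Mathlib

section
/- Let m > 0, γ ∈ ℝ, and θ ∈ (γ, π + γ). Then the function ψ(z) = e^{-z m sin(θ-γ)} (1, e^{iγ}) on (0,∞) is square-integrable, satisfies the boundary condition ψ(0) ∝ (1, e^{iγ}), and satisfies the Dirac eigenvalue equation [[-i d/dz, m e^{-iθ}],[m e^{iθ}, i d/dz]] ψ = m cos(θ-γ) ψ pointwise. -/
open MeasureTheory

/-- For `m > 0` and `θ ∈ (γ, π+γ)`, the function
`ψ(z) = e^{-z m sin(θ-γ)}(1, e^{iγ})` is square-integrable on `(0,∞)`,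
satisfies the boundary condition `ψ(0) ∝ (1, e^{iγ})`, and satisfies the Dirac
eigenvalue equation with eigenvalue `m cos(θ-γ)` pointwise. -/
theorem edge_state_eigenfunction (m γ θ : ℝ) (hm : 0 < m)
    (hθ : θ ∈ Set.Ioo γ (Real.pi + γ))
    (ψ₁ ψ₂ : ℝ → ℂ)
    (hψ₁ : ∀ z : ℝ, ψ₁ z = Complex.exp ((-(z * m * Real.sin (θ - γ)) : ℝ) : ℂ))
    (hψ₂ : ∀ z : ℝ, ψ₂ z =
      Complex.exp (Complex.I * γ) * Complex.exp ((-(z * m * Real.sin (θ - γ)) : ℝ) : ℂ)) :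
    MemLp (fun z : ℝ => (ψ₁ z, ψ₂ z)) 2 (volume.restrict (Set.Ioi (0 : ℝ))) ∧
    (∃ c : ℂ, ψ₁ 0 = c * 1 ∧ ψ₂ 0 = c * Complex.exp (Complex.I * γ)) ∧
    (∀ z : ℝ, 0 < z →
      (-Complex.I * deriv ψ₁ z + (m : ℂ) * Complex.exp (-Complex.I * θ) * ψ₂ z
          = (m : ℂ) * (Real.cos (θ - γ) : ℝ) * ψ₁ z) ∧
      ((m : ℂ) * Complex.exp (Complex.I * θ) * ψ₁ z + Complex.I * deriv ψ₂ z
          = (m : ℂ) * (Real.cos (θ - γ) : ℝ) * ψ₂ z)) := by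
  set a : ℝ := m * Real.sin (θ - γ) with ha
  have hsin : 0 < Real.sin (θ - γ) := by
    apply Real.sin_pos_of_pos_of_lt_pi <;> [linarith [hθ.1]; linarith [hθ.2]]
  have hapos : 0 < a := mul_pos hm hsin
  -- derivative of ψ₁
  have hd1 : ∀ z : ℝ, HasDerivAt ψ₁ ((-a : ℂ) * ψ₁ z) z := by
    intro z
    have h1 : HasDerivAt (fun z : ℝ => ((-(z * a) : ℝ) : ℂ)) (-a : ℂ) z := by
      have : HasDerivAt (fun z : ℝ => -(z * a)) (-a) z := by
        exact ((hasDerivAt_id z).mul_const a).neg.congr_deriv (by simp)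
      simpa using this.ofReal_comp
    have := h1.cexp
    have heq : (fun z : ℝ => Complex.exp ((-(z * a) : ℝ) : ℂ)) = ψ₁ := by
      funext z; rw [hψ₁ z, ha]; ring_nf
    rw [heq] at this
    convert this using 1
    rw [hψ₁ z, ha]; ring_nf
  have hd2 : ∀ z : ℝ, HasDerivAt ψ₂ ((-a : ℂ) * ψ₂ z) z := by
    intro z
    have := ((hd1 z).const_mul (Complex.exp (Complex.I * γ)))
    have heq : (fun z : ℝ => Complex.exp (Complex.I * γ) * ψ₁ z) = ψ₂ := by
      funext z; rw [hψ₂ z, hψ₁ z]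
    rw [heq] at this
    convert this using 1
    · rfl
    rw [hψ₂ z, hψ₁ z]; ring
  refine ⟨?_, ⟨1, by simp [hψ₁ 0, hψ₂ 0]⟩, ?_⟩
  · -- Memℒp
    have hcont : Continuous fun z : ℝ => (ψ₁ z, ψ₂ z) := by
      refine Continuous.prodMk ?_ ?_
      · exact continuous_iff_continuousAt.2 fun z => (hd1 z).continuousAt
      · exact continuous_iff_continuousAt.2 fun z => (hd2 z).continuousAt
    rw [memLp_two_iff_integrable_sq_norm
      (hcont.aestronglyMeasurable.restrict)]
    have hnorm : ∀ z : ℝ, ‖(ψ₁ z, ψ₂ z)‖ ^ 2 = Real.exp (-(2 * a) * z) := by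
      intro z
      have h1 : ‖ψ₁ z‖ = Real.exp (-(z * a)) := by
        rw [hψ₁ z, Complex.norm_exp, Complex.ofReal_re, ha]; ring_nf
      have h2 : ‖ψ₂ z‖ = Real.exp (-(z * a)) := by
        rw [hψ₂ z, norm_mul,
          Complex.norm_exp, Complex.norm_exp, Complex.ofReal_re]
        simp [Complex.mul_re, ha]
        ring_nf
      rw [Prod.norm_def, h1, h2, max_self, ← Real.exp_nat_mul]
      ring_nf
    have : IntegrableOn (fun z : ℝ => Real.exp (-(2 * a) * z)) (Set.Ioi 0) := by
      simpa using exp_neg_integrableOn_Ioi 0 (by linarith : (0:ℝ) < 2 * a)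
    exact this.congr_fun (fun z _ => (hnorm z).symm) measurableSet_Ioi
  · intro z hz
    have e1 := (hd1 z).deriv
    have e2 := (hd2 z).deriv
    set c : ℝ := Real.cos (θ - γ)
    set s : ℝ := Real.sin (θ - γ)
    have hE : Complex.exp (-Complex.I * θ) * Complex.exp (Complex.I * γ)
        = (c : ℂ) - Complex.I * (s : ℂ) := by
      rw [← Complex.exp_add]
      have h : -Complex.I * (θ:ℂ) + Complex.I * (γ:ℂ) = ((-(θ - γ) : ℝ) : ℂ) * Complex.I := by
        push_cast; ring
      rw [h, Complex.exp_mul_I, ← Complex.ofReal_cos, ← Complex.ofReal_sin,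
        Real.cos_neg, Real.sin_neg, Complex.ofReal_neg]
      ring
    have hE2 : Complex.exp (Complex.I * θ)
        = Complex.exp (Complex.I * γ) * ((c : ℂ) + Complex.I * (s : ℂ)) := by
      have h : Complex.I * (θ:ℂ) = Complex.I * (γ:ℂ) + ((θ - γ : ℝ) : ℂ) * Complex.I := by
        push_cast; ring
      rw [h, Complex.exp_add, Complex.exp_mul_I, ← Complex.ofReal_cos, ← Complex.ofReal_sin]
      ring
    have haC : (a : ℂ) = (m : ℂ) * (s : ℂ) := by rw [ha]; push_cast; ring
    have hψ₂' : ψ₂ z = Complex.exp (Complex.I * γ) * ψ₁ z := by rw [hψ₂ z, hψ₁ z]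
    constructor
    · rw [e1, hψ₂']
      linear_combination ψ₁ z * ((m:ℂ) * hE + Complex.I * haC)
    · rw [e2, hψ₂', hE2]
      linear_combination -Complex.I * ψ₁ z * Complex.exp (Complex.I * γ) * haC
end

section
/- Let m > 0, γ ∈ ℝ, θ ∈ (π+γ, 2π+γ), and λ ∈ (-m, m). Then there is no nonzero function ψ ∈ L²((0,∞); ℂ²) of the form ψ(z) = e^{μz} v with v ∈ ℂ², μ ∈ ℂ, Re μ < 0, satisfying both the eigenvalue equation [[-i d/dz, m e^{-iθ}],[m e^{iθ}, i d/dz]] ψ = λ ψ and the boundary condition ψ(0) ∝ (1, e^{iγ}). -/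
lemma deriv_exp_mul (μ : ℂ) (w : ℂ) (z : ℝ) :
    deriv (fun t : ℝ => Complex.exp (μ * t) * w) z = μ * Complex.exp (μ * z) * w := by
  have h : HasDerivAt (fun t : ℝ => Complex.exp (μ * t) * w)
      (μ * Complex.exp (μ * z) * w) z := by
    have h1 : HasDerivAt (fun t : ℂ => Complex.exp (μ * t)) (μ * Complex.exp (μ * z)) (z : ℂ) := by
      simpa [mul_comm, Function.comp_def] using (Complex.hasDerivAt_exp (μ * z)).comp (z : ℂ)
        ((hasDerivAt_id (z : ℂ)).const_mul μ)
    exact (h1.comp_ofReal).mul_const w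
  exact h.deriv

lemma re_aux (a b x : ℝ) :
    (-Complex.I * a + Complex.I * b * Complex.exp ((x : ℂ) * Complex.I)).re
      = -(b * Real.sin x) := by
  simp [Complex.add_re, Complex.mul_re, Complex.exp_ofReal_mul_I_re,
    Complex.exp_ofReal_mul_I_im, Complex.I_re, Complex.I_im]

/-- For `m > 0`, `θ ∈ (π+γ, 2π+γ)` and `λ ∈ (-m, m)`, there is no nonzero decaying
exponential solution `ψ(z) = e^{μz} v` (with `Re μ < 0`) of the half-line Dirac
eigenvalue equation satisfying the boundary condition `v ∝ (1, e^{iγ})`. -/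
theorem no_edge_state (m γ θ lam : ℝ) (hm : 0 < m)
    (hθ : θ ∈ Set.Ioo (Real.pi + γ) (2 * Real.pi + γ))
    (hlam : lam ∈ Set.Ioo (-m) m)
    (v : Fin 2 → ℂ) (μ : ℂ) (hμ : μ.re < 0)
    (heig : ∀ z : ℝ, 0 < z →
      (-Complex.I * deriv (fun t : ℝ => Complex.exp (μ * t) * v 0) z
          + (m : ℂ) * Complex.exp (-Complex.I * θ) * (Complex.exp (μ * z) * v 1)
        = (lam : ℂ) * (Complex.exp (μ * z) * v 0)) ∧
      ((m : ℂ) * Complex.exp (Complex.I * θ) * (Complex.exp (μ * z) * v 0)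
          + Complex.I * deriv (fun t : ℝ => Complex.exp (μ * t) * v 1) z
        = (lam : ℂ) * (Complex.exp (μ * z) * v 1)))
    (hbc : ∃ c : ℂ, v 0 = c * 1 ∧ v 1 = c * Complex.exp (Complex.I * γ)) :
    v = 0 := by
  obtain ⟨c, hc0, hc1⟩ := hbc
  have hc : c = 0 := by
    by_contra hc
    have h2 := (heig 1 one_pos).2
    rw [deriv_exp_mul, hc0, hc1] at h2
    have hexp : Complex.exp (μ * (1:ℝ)) ≠ 0 := Complex.exp_ne_zero _
    -- derive: m e^{iθ} + i μ e^{iγ} = λ e^{iγ}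
    have key : (m : ℂ) * Complex.exp (Complex.I * θ) + Complex.I * μ * Complex.exp (Complex.I * γ)
        = (lam : ℂ) * Complex.exp (Complex.I * γ) := by
      apply mul_right_cancel₀ (b := Complex.exp (μ * (1:ℝ)) * c) (mul_ne_zero hexp hc)
      linear_combination h2
    -- solve for μ
    have hμeq : μ = -Complex.I * lam + Complex.I * m * Complex.exp (Complex.I * (θ - γ)) := by
      have hg : Complex.exp (Complex.I * γ) ≠ 0 := Complex.exp_ne_zero _
      have hsplit : Complex.exp (Complex.I * θ)
          = Complex.exp (Complex.I * (θ - γ)) * Complex.exp (Complex.I * γ) := by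
        rw [← Complex.exp_add]; ring_nf
      rw [hsplit] at key
      apply mul_right_cancel₀ (b := Complex.exp (Complex.I * γ)) hg
      linear_combination -Complex.I * key + μ * Complex.exp (Complex.I * γ) * Complex.I_sq
    have hre : μ.re = -(m * Real.sin (θ - γ)) := by
      rw [hμeq, show Complex.I * ((θ : ℂ) - γ) = ((θ - γ : ℝ) : ℂ) * Complex.I by
        push_cast; ring]
      exact re_aux lam m (θ - γ)
    have hsin : Real.sin (θ - γ) < 0 := by
      have h1 : Real.pi < θ - γ := by linarith [hθ.1]
      have h2 : θ - γ < 2 * Real.pi := by linarith [hθ.2]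
      have : Real.sin (θ - γ - 2 * Real.pi) < 0 := by
        apply Real.sin_neg_of_neg_of_neg_pi_lt <;> linarith
      simpa [Real.sin_sub_two_pi] using this
    nlinarith [hμ, hre]
  subst hc
  funext i
  fin_cases i <;> simp [hc0, hc1]
end
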